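/- Let w be a right-infinite word over a finite alphabet Σ and z a factor of w. Then z ∈ Rad(w) if and only if for every natural number n ≥ |z| there exists N = N(n) such that every factor of w of length at least N has a subfactor of length n that does not contain z as a factor. -/

import Mathlib

/-- The factor of `w` of length `n` starting at position `i`. -/
def factorAt {A : Type*} (w : ℕ → A) (i n : ℕ) : List A :=
  (List.range n).map (fun k => w (i + k))

/-- `u` is a (finite, contiguous) factor of the right-infinite word `w`. -/
def IsFactorOf {A : Type*} (u : List A) (w : ℕ → A) : Prop :=
  ∃ i, u = factorAt w i u.length

/-- The set of factors of `w`. -/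
def Fac {A : Type*} (w : ℕ → A) : Set (List A) := {u | IsFactorOf u w}

/-- `w` is recurrent: every factor occurs at arbitrarily large positions. -/
def Recurrent {A : Type*} (w : ℕ → A) : Prop :=
  ∀ u ∈ Fac w, ∀ N : ℕ, ∃ i ≥ N, u = factorAt w i u.length

/-- `w` is uniformly recurrent: each factor occurs in every sufficiently long factor. -/
def UniformlyRecurrent {A : Type*} (w : ℕ → A) : Prop :=
  ∀ u ∈ Fac w, ∃ N : ℕ, ∀ y ∈ Fac w, y.length = N → u <:+: y

/-- `w` is (purely) periodic. -/
def PeriodicWord {A : Type*} (w : ℕ → A) : Prop :=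
  ∃ p ≥ 1, ∀ n, w (n + p) = w n

/-- `w` is eventually periodic. -/
def EventuallyPeriodicWord {A : Type*} (w : ℕ → A) : Prop :=
  ∃ p ≥ 1, ∃ N, ∀ n ≥ N, w (n + p) = w n

/-- The factor complexity function of `w`. -/
noncomputable def cplx {A : Type*} (w : ℕ → A) (n : ℕ) : ℕ :=
  Set.ncard {u | u ∈ Fac w ∧ u.length = n}

/-- A set of finite words is factor-closed. -/
def FactorClosed {A : Type*} (S : Set (List A)) : Prop :=
  ∀ y ∈ S, ∀ u, u <:+: y → u ∈ S

/-- The radical of `w`. -/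
def Rad {A : Type*} (w : ℕ → A) : Set (List A) :=
  {z | z ∈ Fac w ∧ ∀ Y : Finset (List A),
    (∀ y ∈ Y, y ∈ Fac w ∧ z <:+: y) →
    ∃ N : ℕ, ∀ L : List (List A), L.length = N → (∀ y ∈ L, y ∈ Y) →
      L.flatten ∉ Fac w}

/-- The recurrent spectrum of `w`, with classes identified with their factor sets. -/
def RecSpec {A : Type*} (w : ℕ → A) : Set (Set (List A)) :=
  {F | ∃ v : ℕ → A, Recurrent v ∧ F = Fac v ∧ Fac v ⊆ Fac w}

/- ### Auxiliary lemmas -/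

lemma factorAt_length {A : Type*} (w : ℕ → A) (i n : ℕ) :
    (factorAt w i n).length = n := by
  simp [factorAt]

lemma factorAt_mem_Fac {A : Type*} (w : ℕ → A) (i n : ℕ) :
    factorAt w i n ∈ Fac w :=
  ⟨i, by rw [factorAt_length]⟩

lemma factorAt_append {A : Type*} (w : ℕ → A) (i a b : ℕ) :
    factorAt w i (a + b) = factorAt w i a ++ factorAt w (i + a) b := by
  simp only [factorAt, List.range_add, List.map_append, List.map_map]
  congr 1
  apply List.map_congr_left
  intro k _
  simp [Nat.add_assoc, Nat.add_comm a k, Nat.add_left_comm]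

lemma factorAt_infix {A : Type*} (w : ℕ → A) (i a b c : ℕ) (h : a + b ≤ c) :
    factorAt w (i + a) b <:+: factorAt w i c := by
  have h1 : c = a + b + (c - (a + b)) := by omega
  rw [h1, factorAt_append, factorAt_append]
  exact ⟨factorAt w i a, factorAt w (i + (a + b)) (c - (a + b)), by simp [Nat.add_assoc]⟩

lemma flatten_factorAt {A : Type*} (w : ℕ → A) (i n : ℕ) :
    ∀ m : ℕ, ((List.range m).map (fun j => factorAt w (i + j * n) n)).flatten
      = factorAt w i (m * n) := by
  intro m
  induction m with
  | zero => simp [factorAt]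
  | succ m ih =>
    rw [List.range_succ, List.map_append, List.flatten_append, ih]
    simp only [List.map_cons, List.map_nil, List.flatten_cons, List.flatten_nil,
      List.append_nil]
    rw [Nat.succ_mul, factorAt_append]

/-- A sufficiently long infix of a concatenation of short blocks contains a full block. -/
lemma exists_block {A : Type*} {M : ℕ} (hM : 1 ≤ M) :
    ∀ (L : List (List A)) (u : List A), (∀ y ∈ L, y.length ≤ M) →
      u <:+: L.flatten → 2 * M ≤ u.length → ∃ y ∈ L, y <:+: u := by
  intro L
  induction L with
  | nil =>
    intro u _ hu hlen
    rw [List.flatten_nil, List.infix_nil] at hu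
    subst hu
    simp at hlen
    omega
  | cons y L' ih =>
    intro u hb hu hlen
    have hyM : y.length ≤ M := hb y (List.mem_cons_self)
    obtain ⟨s, t, hst⟩ := hu
    rw [List.flatten_cons] at hst
    by_cases h : y.length ≤ s.length
    · -- u lies entirely inside L'.flatten
      have hy1 : y <+: s ++ (u ++ t) := by
        rw [← List.append_assoc, hst]; exact List.prefix_append y L'.flatten
      have hy2 : y <+: s := List.prefix_of_prefix_length_le hy1 (List.prefix_append s (u ++ t)) h
      obtain ⟨s', rfl⟩ := hy2
      have : s' ++ u ++ t = L'.flatten := by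
        have := hst
        simp only [List.append_assoc] at this ⊢
        exact (List.append_cancel_left this)
      obtain ⟨y', hy', hyu⟩ := ih u (fun a ha => hb a (List.mem_cons_of_mem y ha))
        ⟨s', t, this⟩ hlen
      exact ⟨y', List.mem_cons_of_mem y hy', hyu⟩
    · -- u starts inside y, so u.drop k is a prefix of L'.flatten
      push_neg at h
      set k := y.length - s.length with hk
      have hk1 : 1 ≤ k := by omega
      have hkM : k ≤ M := by omega
      have hku : k ≤ u.length := by omega
      have hdrop : u.drop k ++ t = L'.flatten := by
        have h1 : (s ++ (u ++ t)).drop y.length = L'.flatten := by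
          rw [← List.append_assoc, hst]
          exact List.drop_left' rfl
        rw [List.drop_append, List.drop_eq_nil_of_le (by omega),
          List.nil_append, ← hk, List.drop_append_of_le_length hku] at h1
        exact h1
      have hpre : u.drop k <+: L'.flatten := ⟨t, hdrop⟩
      have hlen2 : M ≤ (u.drop k).length := by
        rw [List.length_drop]; omega
      have hL'ne : L' ≠ [] := by
        intro h0
        rw [h0] at hpre
        simp only [List.flatten_nil, List.prefix_nil] at hpre
        rw [hpre] at hlen2
        simp at hlen2
        omega
      obtain ⟨y', L'', rfl⟩ := List.exists_cons_of_ne_nil hL'ne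
      have hy'pre : y' <+: (y' :: L'').flatten := by
        rw [List.flatten_cons]; exact List.prefix_append _ _
      have hy'M : y'.length ≤ M := hb y' (by simp)
      have hy'u : y' <+: u.drop k :=
        List.prefix_of_prefix_length_le hy'pre hpre (by omega)
      have : y' <:+: u := hy'u.isInfix.trans (List.drop_suffix k u).isInfix
      exact ⟨y', by simp, this⟩

lemma length_le_flatten_length {A : Type*} :
    ∀ (L : List (List A)), (∀ y ∈ L, 1 ≤ y.length) → L.length ≤ L.flatten.length := by
  intro L
  induction L with
  | nil => simp
  | cons y L' ih =>
    intro h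
    rw [List.flatten_cons, List.length_append, List.length_cons]
    have h1 := h y (List.mem_cons_self)
    have h2 := ih (fun a ha => h a (List.mem_cons_of_mem y ha))
    omega

theorem mem_radical_iff {A : Type*} [Finite A] (w : ℕ → A) (z : List A)
    (hz : z ∈ Fac w) :
    z ∈ Rad w ↔ ∀ n ≥ z.length, ∃ N : ℕ, ∀ y ∈ Fac w, N ≤ y.length →
      ∃ u, u <:+: y ∧ u.length = n ∧ ¬ z <:+: u := by
  constructor
  · -- forward direction
    rintro ⟨-, hR⟩ n hn
    -- Y := factors of w of length n containing z
    have hfin : {u : List A | u ∈ Fac w ∧ z <:+: u ∧ u.length = n}.Finite :=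
      (List.finite_length_eq A n).subset (fun u hu => hu.2.2)
    obtain ⟨N₀, hN₀⟩ := hR hfin.toFinset (by
      intro y hy
      rw [Set.Finite.mem_toFinset] at hy
      exact ⟨hy.1, hy.2.1⟩)
    refine ⟨N₀ * n, ?_⟩
    intro y hy hylen
    by_contra hcon
    push_neg at hcon
    obtain ⟨i, hi⟩ := hy
    -- the blocks
    set L := (List.range N₀).map (fun j => factorAt w (i + j * n) n) with hL
    have hLlen : L.length = N₀ := by simp [hL]
    have hmem : ∀ v ∈ L, v ∈ hfin.toFinset := by
      intro v hv
      rw [hL, List.mem_map] at hv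
      obtain ⟨j, hj, rfl⟩ := hv
      rw [List.mem_range] at hj
      rw [Set.Finite.mem_toFinset]
      refine ⟨factorAt_mem_Fac w _ n, ?_, factorAt_length w _ n⟩
      have hinf : factorAt w (i + j * n) n <:+: y := by
        rw [hi]
        exact factorAt_infix w i (j * n) n y.length (by nlinarith)
      exact hcon _ hinf (factorAt_length w _ n)
    have hflat : L.flatten ∈ Fac w := by
      rw [hL, flatten_factorAt]
      exact factorAt_mem_Fac w i (N₀ * n)
    exact hN₀ L hLlen hmem hflat
  · -- backward direction
    intro hRHS
    refine ⟨hz, ?_⟩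
    have hz1 : z ≠ [] := by
      intro h0
      obtain ⟨N₁, hN₁⟩ := hRHS 1 (by simp [h0])
      obtain ⟨u, -, -, hnz⟩ := hN₁ (factorAt w 0 N₁) (factorAt_mem_Fac w 0 N₁)
        (by rw [factorAt_length])
      exact hnz (h0 ▸ List.nil_infix)
    have hz1' : 1 ≤ z.length := by
      cases z with
      | nil => exact absurd rfl hz1
      | cons a l => simp
    intro Y hY
    rcases Y.eq_empty_or_nonempty with rfl | hYne
    · refine ⟨1, ?_⟩
      intro L hLlen hLmem
      cases L with
      | nil => simp at hLlen
      | cons a L' => exact absurd (hLmem a (List.mem_cons_self)) (by simp)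
    · set M := Y.sup List.length with hM
      have hMy : ∀ y ∈ Y, y.length ≤ M := fun y hy => Finset.le_sup hy
      have hM1 : 1 ≤ M := by
        obtain ⟨y0, hy0⟩ := hYne
        have := (hY y0 hy0).2.length_le
        have := hMy y0 hy0
        omega
      have hMz : z.length ≤ 2 * M := by
        obtain ⟨y0, hy0⟩ := hYne
        have := (hY y0 hy0).2.length_le
        have := hMy y0 hy0
        omega
      obtain ⟨N₁, hN₁⟩ := hRHS (2 * M) hMz
      refine ⟨N₁, ?_⟩
      intro L hLlen hLmem hflat
      have hone : ∀ v ∈ L, 1 ≤ v.length := by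
        intro v hv
        have := (hY v (hLmem v hv)).2.length_le
        omega
      have hlenf : N₁ ≤ L.flatten.length := by
        have := length_le_flatten_length L hone
        omega
      obtain ⟨u, hu, hulen, hnz⟩ := hN₁ L.flatten hflat hlenf
      obtain ⟨y', hy'L, hy'u⟩ := exists_block hM1 L u
        (fun v hv => hMy v (hLmem v hv)) hu (by omega)
      exact hnz (((hY y' (hLmem y' hy'L)).2).trans hy'u)
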